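/- Let n ≥ 2, m = n(n−1)/2, B ∈ ℝ^{m×n} the signed vertex-edge incidence matrix of the complete graph on n vertices, S ⊆ {1,…,m}, and r̄(j) ∈ ℝ for each j ∈ S. Define F(w) = Σ_{j ∈ S} ([R(w)]_{j,j} − r̄(j))², where R(w) = B (Bᵀ diag(w) B)⁺ Bᵀ. Then at every w ∈ ℝ^m with strictly positive entries, F is twice differentiable and its Hessian matrix is H_F(w) = −4 [R diag(Δ(w)) R] ∘ R + 2 (R∘R) I_S (R∘R), where R = R(w), ∘ denotes the Hadamard product, Δ(w) ∈ ℝ^m has entries Δ(w)_j = r̄(j) − [R(w)]_{j,j} for j ∈ S and 0 otherwise, and I_S ∈ ℝ^{m×m} is the diagonal matrix with ones at the diagonal entries indexed by S and zeros elsewhere; equivalently, ∂²F/∂w_i ∂w_k = −4 (Σ_j R_{i,j} Δ(w)_j R_{j,k}) R_{i,k} + 2 Σ_{j ∈ S} R_{i,j}² R_{j,k}². -/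

import Mathlib

open Matrix BigOperators Polynomial Filter Topology

/-- The four Penrose conditions characterizing the Moore–Penrose pseudoinverse. -/
def IsMoorePenrose {m k : Type*} [Fintype m] [Fintype k] (M : Matrix m k ℝ)
    (P : Matrix k m ℝ) : Prop :=
  M * P * M = M ∧ P * M * P = P ∧ (M * P)ᵀ = M * P ∧ (P * M)ᵀ = P * M

/- The Moore–Penrose pseudoinverse `M⁺`: it always exists and is unique, so this
choice-based definition picks out exactly the Moore–Penrose pseudoinverse. -/
open Classical in
noncomputable def pinv {m k : Type*} [Fintype m] [Fintype k] (M : Matrix m k ℝ) :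
    Matrix k m ℝ :=
  if h : ∃ P, IsMoorePenrose M P then h.choose else 0

/-- Index type for the unordered pairs `{u,v}`, `u < v`, of vertices of the complete graph
on `n` vertices; there are `n(n-1)/2` of them. -/
abbrev PairIdx (n : ℕ) := {p : Fin n × Fin n // p.1 < p.2}

/-- The signed vertex-edge incidence matrix `B` of the complete graph on `n` vertices:
the row for the pair `{u,v}` (with `u < v`) is `χ_{u,v} = e_u - e_v`. -/
def incB (n : ℕ) : Matrix (PairIdx n) (Fin n) ℝ :=
  Matrix.of fun p i => (if i = p.1.1 then 1 else 0) - (if i = p.1.2 then 1 else 0)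

/-- The entrywise absolute value `|B|` of the incidence matrix `B`. -/
def absB (n : ℕ) : Matrix (PairIdx n) (Fin n) ℝ := (incB n).map fun x => |x|

/-- `L(w) = Bᵀ diag(w) B`, the Laplacian of the weighted graph with edge weights `w`. -/
noncomputable def Lw {n : ℕ} (w : PairIdx n → ℝ) : Matrix (Fin n) (Fin n) ℝ :=
  (incB n)ᵀ * Matrix.diagonal w * incB n

/-- `R(w) = B L(w)⁺ Bᵀ`, whose diagonal entries are the pairwise effective resistances. -/
noncomputable def Rw {n : ℕ} (w : PairIdx n → ℝ) : Matrix (PairIdx n) (PairIdx n) ℝ :=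
  incB n * pinv (Lw w) * (incB n)ᵀ

/-- The least squares objective `F(w) = Σ_{j ∈ S} ([R(w)]_{j,j} - r̄(j))²`. -/
noncomputable def Fobj {n : ℕ} (S : Finset (PairIdx n)) (rbar : PairIdx n → ℝ)
    (w : PairIdx n → ℝ) : ℝ :=
  ∑ j ∈ S, (Rw w j j - rbar j) ^ 2

/-! ### Auxiliary algebra -/

/-- all-ones matrix -/
def Jmat (n : ℕ) : Matrix (Fin n) (Fin n) ℝ := Matrix.of fun _ _ => 1

/-- regularized Laplacian -/
noncomputable def Mmat {n : ℕ} (w : PairIdx n → ℝ) : Matrix (Fin n) (Fin n) ℝ :=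
  Lw w + (n : ℝ)⁻¹ • Jmat n

lemma incB_rowsum {n : ℕ} (p : PairIdx n) : ∑ i, incB n p i = 0 := by
  simp [incB, Finset.sum_sub_distrib]

lemma incB_mul_J {n : ℕ} : incB n * Jmat n = 0 := by
  ext p j
  simp [Matrix.mul_apply, Jmat, incB_rowsum p, incB, Finset.sum_sub_distrib]

lemma J_mul_incBT {n : ℕ} : Jmat n * (incB n)ᵀ = 0 := by
  have := congrArg Matrix.transpose (incB_mul_J (n := n))
  have hJ : (Jmat n)ᵀ = Jmat n := by ext i j; simp [Jmat]
  simpa [Matrix.transpose_mul, hJ] using this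

lemma Jmat_transpose {n : ℕ} : (Jmat n)ᵀ = Jmat n := by ext i j; simp [Jmat]

lemma Lw_transpose {n : ℕ} (w : PairIdx n → ℝ) : (Lw w)ᵀ = Lw w := by
  simp [Lw, Matrix.transpose_mul, Matrix.diagonal_transpose, Matrix.mul_assoc]

lemma Lw_mul_J {n : ℕ} (w : PairIdx n → ℝ) : Lw w * Jmat n = 0 := by
  rw [Lw, Matrix.mul_assoc, incB_mul_J, Matrix.mul_zero]

lemma J_mul_Lw {n : ℕ} (w : PairIdx n → ℝ) : Jmat n * Lw w = 0 := by
  have := congrArg Matrix.transpose (Lw_mul_J w)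
  simpa [Matrix.transpose_mul, Jmat_transpose, Lw_transpose] using this

lemma J_mul_J {n : ℕ} : Jmat n * Jmat n = (n : ℝ) • Jmat n := by
  ext i j; simp [Matrix.mul_apply, Jmat]

lemma Mmat_transpose {n : ℕ} (w : PairIdx n → ℝ) : (Mmat w)ᵀ = Mmat w := by
  simp [Mmat, Matrix.transpose_add, Lw_transpose, Jmat_transpose, Matrix.transpose_smul]

lemma Mmat_mul_J {n : ℕ} (hn : 2 ≤ n) (w : PairIdx n → ℝ) : Mmat w * Jmat n = Jmat n := by
  have hn0 : (n : ℝ) ≠ 0 := by positivity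
  rw [Mmat, Matrix.add_mul, Lw_mul_J, Matrix.smul_mul, J_mul_J, zero_add, smul_smul,
    inv_mul_cancel₀ hn0, one_smul]

lemma J_mul_Mmat {n : ℕ} (hn : 2 ≤ n) (w : PairIdx n → ℝ) : Jmat n * Mmat w = Jmat n := by
  have := congrArg Matrix.transpose (Mmat_mul_J hn w)
  simpa [Matrix.transpose_mul, Jmat_transpose, Mmat_transpose] using this

lemma incB_mulVec {n : ℕ} (x : Fin n → ℝ) (p : PairIdx n) :
    (incB n *ᵥ x) p = x p.1.1 - x p.1.2 := by
  simp [incB, Matrix.mulVec, dotProduct, sub_mul, Finset.sum_sub_distrib]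

lemma Mmat_posDef {n : ℕ} (hn : 2 ≤ n) {w : PairIdx n → ℝ} (hw : ∀ i, 0 < w i) :
    (Mmat w).PosDef := by
  have hherm : (Mmat w).IsHermitian := by
    rw [Matrix.IsHermitian]
    simpa using Mmat_transpose w
  refine Matrix.PosDef.of_dotProduct_mulVec_pos hherm fun x hx => ?_
  have key : dotProduct (star x) (Mmat w *ᵥ x)
      = (∑ p, w p * ((incB n *ᵥ x) p)^2) + (n:ℝ)⁻¹ * (∑ i, x i)^2 := by
    have hsx : star x = x := by simp
    rw [hsx, Mmat, Matrix.add_mulVec, dotProduct_add]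
    congr 1
    · rw [Lw, Matrix.mul_assoc, ← Matrix.mulVec_mulVec, ← Matrix.mulVec_mulVec,
        dotProduct_mulVec, Matrix.vecMul_transpose]
      simp [Matrix.mulVec_diagonal, dotProduct, mul_pow, sq]
      ring_nf
      apply Finset.sum_congr rfl
      intro p _; ring
    · rw [Matrix.smul_mulVec, dotProduct_smul]
      congr 1
      simp [Jmat, Matrix.mulVec, dotProduct, Finset.mul_sum, sq, Finset.sum_mul,
        mul_comm]
  rw [key]
  rcases eq_or_ne (incB n *ᵥ x) 0 with hB | hB
  · -- x is constant, so the sum term is positive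
    have hconst : ∀ i j : Fin n, x i = x j := by
      have hpair : ∀ i j : Fin n, i < j → x i = x j := by
        intro i j hij
        have := congrFun hB ⟨(i, j), hij⟩
        have := incB_mulVec x ⟨(i, j), hij⟩
        simp_all [sub_eq_zero]
      intro i j
      rcases lt_trichotomy i j with h | h | h
      · exact hpair i j h
      · rw [h]
      · exact (hpair j i h).symm
    have hx0 : x ≠ 0 := hx
    have hne : ∃ i, x i ≠ 0 := by
      by_contra h
      push_neg at h
      exact hx0 (funext h)
    obtain ⟨i0, hi0⟩ := hne
    have hsum : ∑ i, x i = (n : ℝ) * x i0 := by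
      rw [Finset.sum_congr rfl (fun i _ => hconst i i0)]
      simp [mul_comm]
    have h1 : 0 < (n:ℝ)⁻¹ * (∑ i, x i)^2 := by
      rw [hsum]
      have hn0 : (0:ℝ) < n := by
        have : 0 < n := by omega
        exact_mod_cast this
      have hne0 : (n:ℝ) * x i0 ≠ 0 := mul_ne_zero hn0.ne' hi0
      exact mul_pos (inv_pos.2 hn0) (pow_two_pos_of_ne_zero hne0)
    have h2 : 0 ≤ ∑ p, w p * ((incB n *ᵥ x) p)^2 :=
      Finset.sum_nonneg fun p _ => mul_nonneg (hw p).le (sq_nonneg _)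
    linarith
  · have hp : ∃ p, (incB n *ᵥ x) p ≠ 0 := by
      by_contra h
      push_neg at h
      exact hB (funext h)
    obtain ⟨p0, hp0⟩ := hp
    have h1 : 0 < ∑ p, w p * ((incB n *ᵥ x) p)^2 := by
      apply Finset.sum_pos'
      · intro p _; exact mul_nonneg (hw p).le (sq_nonneg _)
      · exact ⟨p0, Finset.mem_univ _,
          mul_pos (hw p0) (pow_two_pos_of_ne_zero hp0)⟩
    have h2 : 0 ≤ (n:ℝ)⁻¹ * (∑ i, x i)^2 :=
      mul_nonneg (by positivity) (sq_nonneg _)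
    linarith

lemma IsMoorePenrose.unique {m k : Type*} [Fintype m] [Fintype k] {M : Matrix m k ℝ}
    {P Q : Matrix k m ℝ} (hP : IsMoorePenrose M P) (hQ : IsMoorePenrose M Q) : P = Q := by
  obtain ⟨hP1, hP2, hP3, hP4⟩ := hP
  obtain ⟨hQ1, hQ2, hQ3, hQ4⟩ := hQ
  have eMP : M * P = Pᵀ * Mᵀ := by rw [← Matrix.transpose_mul, hP3]
  have ePM : P * M = Mᵀ * Pᵀ := by rw [← Matrix.transpose_mul, hP4]
  have hMP : M * P = M * Q := by
    calc M * P = Pᵀ * Mᵀ := eMP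
      _ = Pᵀ * (Mᵀ * (M * Q)ᵀ) := by rw [← Matrix.transpose_mul (M * Q) M, hQ1]
      _ = (M * P) * (M * Q) := by rw [hQ3, ← Matrix.mul_assoc, ← eMP]
      _ = M * Q := by rw [← Matrix.mul_assoc, hP1]
  have hPM : P * M = Q * M := by
    calc P * M = Mᵀ * Pᵀ := ePM
      _ = ((Q * M)ᵀ * Mᵀ) * Pᵀ := by
          rw [← Matrix.transpose_mul M (Q * M), ← Matrix.mul_assoc, hQ1]
      _ = (Q * M) * (Mᵀ * Pᵀ) := by rw [hQ4, Matrix.mul_assoc]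
      _ = Q * M := by rw [← ePM, Matrix.mul_assoc, ← Matrix.mul_assoc M P M, hP1]
  calc P = P * M * P := hP2.symm
    _ = Q * M * P := by rw [hPM]
    _ = Q * (M * Q) := by rw [Matrix.mul_assoc, hMP]
    _ = Q := by rw [← Matrix.mul_assoc, hQ2]

lemma hcn {n : ℕ} (hn : 2 ≤ n) : ((n:ℝ)⁻¹) * (n:ℝ) = 1 := by
  have : (n:ℝ) ≠ 0 := by
    have : 0 < n := by omega
    exact_mod_cast this.ne'
  exact inv_mul_cancel₀ this

lemma Minv_mul {n : ℕ} {w : PairIdx n → ℝ} (hM : IsUnit (Mmat w)) :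
    (Mmat w)⁻¹ * Mmat w = 1 :=
  Matrix.nonsing_inv_mul _ ((Matrix.isUnit_iff_isUnit_det _).mp hM)

lemma mul_Minv {n : ℕ} {w : PairIdx n → ℝ} (hM : IsUnit (Mmat w)) :
    Mmat w * (Mmat w)⁻¹ = 1 :=
  Matrix.mul_nonsing_inv _ ((Matrix.isUnit_iff_isUnit_det _).mp hM)

lemma Minv_mul_J {n : ℕ} (hn : 2 ≤ n) {w : PairIdx n → ℝ} (hM : IsUnit (Mmat w)) :
    (Mmat w)⁻¹ * Jmat n = Jmat n := by
  conv_lhs => rw [← Mmat_mul_J hn w, ← Matrix.mul_assoc, Minv_mul hM, Matrix.one_mul]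

lemma J_mul_Minv {n : ℕ} (hn : 2 ≤ n) {w : PairIdx n → ℝ} (hM : IsUnit (Mmat w)) :
    Jmat n * (Mmat w)⁻¹ = Jmat n := by
  conv_lhs => rw [← J_mul_Mmat hn w, Matrix.mul_assoc, mul_Minv hM, Matrix.mul_one]

lemma Lw_eq_M_sub {n : ℕ} (w : PairIdx n → ℝ) :
    Lw w = Mmat w - (n:ℝ)⁻¹ • Jmat n := by
  rw [Mmat, add_sub_cancel_right]

lemma LP_eq {n : ℕ} (hn : 2 ≤ n) {w : PairIdx n → ℝ} (hM : IsUnit (Mmat w)) :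
    Lw w * ((Mmat w)⁻¹ - (n:ℝ)⁻¹ • Jmat n) = 1 - (n:ℝ)⁻¹ • Jmat n := by
  rw [Lw_eq_M_sub, Matrix.sub_mul, Matrix.mul_sub, Matrix.mul_sub, mul_Minv hM,
    Matrix.mul_smul, Mmat_mul_J hn, Matrix.smul_mul, Matrix.smul_mul, Matrix.mul_smul,
    J_mul_Minv hn hM, J_mul_J, smul_smul, smul_smul,
    mul_assoc ((n:ℝ)⁻¹) ((n:ℝ)⁻¹) (n:ℝ), hcn hn, mul_one]
  abel

lemma PL_eq {n : ℕ} (hn : 2 ≤ n) {w : PairIdx n → ℝ} (hM : IsUnit (Mmat w)) :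
    ((Mmat w)⁻¹ - (n:ℝ)⁻¹ • Jmat n) * Lw w = 1 - (n:ℝ)⁻¹ • Jmat n := by
  rw [Lw_eq_M_sub, Matrix.sub_mul, Matrix.mul_sub, Matrix.mul_sub, Minv_mul hM,
    Matrix.mul_smul, Minv_mul_J hn hM, Matrix.smul_mul, Matrix.smul_mul, Matrix.mul_smul,
    J_mul_Mmat hn, J_mul_J, smul_smul, smul_smul,
    mul_assoc ((n:ℝ)⁻¹) ((n:ℝ)⁻¹) (n:ℝ), hcn hn, mul_one]
  abel

lemma J_mul_P {n : ℕ} (hn : 2 ≤ n) {w : PairIdx n → ℝ} (hM : IsUnit (Mmat w)) :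
    Jmat n * ((Mmat w)⁻¹ - (n:ℝ)⁻¹ • Jmat n) = 0 := by
  rw [Matrix.mul_sub, J_mul_Minv hn hM, Matrix.mul_smul, J_mul_J, smul_smul,
    hcn hn, one_smul, sub_self]

lemma isMoorePenrose_Lw {n : ℕ} (hn : 2 ≤ n) {w : PairIdx n → ℝ} (hM : IsUnit (Mmat w)) :
    IsMoorePenrose (Lw w) ((Mmat w)⁻¹ - (n:ℝ)⁻¹ • Jmat n) := by
  refine ⟨?_, ?_, ?_, ?_⟩
  · rw [LP_eq hn hM, Matrix.sub_mul, Matrix.one_mul, Matrix.smul_mul, J_mul_Lw, smul_zero,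
      sub_zero]
  · rw [PL_eq hn hM, Matrix.sub_mul, Matrix.one_mul, Matrix.smul_mul, J_mul_P hn hM, smul_zero,
      sub_zero]
  · rw [LP_eq hn hM]
    simp [Matrix.transpose_sub, Matrix.transpose_smul, Jmat_transpose]
  · rw [PL_eq hn hM]
    simp [Matrix.transpose_sub, Matrix.transpose_smul, Jmat_transpose]

lemma pinv_Lw {n : ℕ} (hn : 2 ≤ n) {w : PairIdx n → ℝ} (hM : IsUnit (Mmat w)) :
    pinv (Lw w) = (Mmat w)⁻¹ - (n:ℝ)⁻¹ • Jmat n := by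
  have hex : ∃ P, IsMoorePenrose (Lw w) P := ⟨_, isMoorePenrose_Lw hn hM⟩
  rw [pinv, dif_pos hex]
  exact IsMoorePenrose.unique hex.choose_spec (isMoorePenrose_Lw hn hM)

lemma Rw_eq {n : ℕ} (hn : 2 ≤ n) {w : PairIdx n → ℝ} (hM : IsUnit (Mmat w)) :
    Rw w = incB n * (Mmat w)⁻¹ * (incB n)ᵀ := by
  rw [Rw, pinv_Lw hn hM, Matrix.mul_sub, Matrix.sub_mul, Matrix.mul_smul, incB_mul_J,
    smul_zero, Matrix.zero_mul, sub_zero]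

/-! ### Analysis setup -/

attribute [local instance] Matrix.linftyOpNormedRing Matrix.linftyOpNormedAlgebra

section Analysis

variable {n : ℕ}

/-- `Lw` as a continuous linear map. -/
noncomputable def Lclm (n : ℕ) : (PairIdx n → ℝ) →L[ℝ] Matrix (Fin n) (Fin n) ℝ :=
  LinearMap.toContinuousLinearMap
    { toFun := fun w => Lw w
      map_add' := fun a b => by
        have h : Matrix.diagonal (a + b) = Matrix.diagonal a + Matrix.diagonal b :=
          (Matrix.diagonal_add a b).symm
        simp only [Lw, h, Matrix.mul_add, Matrix.add_mul]
      map_smul' := fun c a => by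
        simp only [Lw, Matrix.diagonal_smul, Matrix.mul_smul, Matrix.smul_mul,
          RingHom.id_apply] }

@[simp] lemma Lclm_apply (w : PairIdx n → ℝ) : Lclm n w = Lw w := rfl

lemma hasFDerivAt_Mmat (w : PairIdx n → ℝ) : HasFDerivAt (fun w' => Mmat w') (Lclm n) w := by
  have h := ((Lclm n).hasFDerivAt (x := w)).add_const ((n:ℝ)⁻¹ • Jmat n)
  exact h

/-- conjugation `X ↦ B X Bᵀ` as a continuous linear map -/
noncomputable def LB (n : ℕ) :
    Matrix (Fin n) (Fin n) ℝ →L[ℝ] Matrix (PairIdx n) (PairIdx n) ℝ :=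
  LinearMap.toContinuousLinearMap
    { toFun := fun X => incB n * X * (incB n)ᵀ
      map_add' := fun X Y => by simp only [Matrix.mul_add, Matrix.add_mul]
      map_smul' := fun c X => by
        simp only [Matrix.mul_smul, Matrix.smul_mul, RingHom.id_apply] }

@[simp] lemma LB_apply (X : Matrix (Fin n) (Fin n) ℝ) :
    LB n X = incB n * X * (incB n)ᵀ := rfl

/-- the smooth version of `Rw` -/
noncomputable def psiF (n : ℕ) (w : PairIdx n → ℝ) : Matrix (PairIdx n) (PairIdx n) ℝ :=
  incB n * Ring.inverse (Mmat w) * (incB n)ᵀ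

lemma psiF_eq_Rw (hn : 2 ≤ n) {w : PairIdx n → ℝ} (hM : IsUnit (Mmat w)) :
    psiF n w = Rw w := by
  rw [psiF, Rw_eq hn hM, Matrix.nonsing_inv_eq_ringInverse]

/-- candidate derivative of `psiF` -/
noncomputable def dPsi {n : ℕ} (A : Matrix (PairIdx n) (PairIdx n) ℝ) :
    (PairIdx n → ℝ) →L[ℝ] Matrix (PairIdx n) (PairIdx n) ℝ :=
  LinearMap.toContinuousLinearMap
    { toFun := fun v => -(A * Matrix.diagonal v * A)
      map_add' := fun a b => by
        have h : Matrix.diagonal (a + b) = Matrix.diagonal a + Matrix.diagonal b :=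
          (Matrix.diagonal_add a b).symm
        simp only [h, Matrix.mul_add, Matrix.add_mul, neg_add]
      map_smul' := fun c a => by
        simp only [Matrix.diagonal_smul, Matrix.mul_smul, Matrix.smul_mul,
          RingHom.id_apply, smul_neg] }

@[simp] lemma dPsi_apply (A : Matrix (PairIdx n) (PairIdx n) ℝ) (v : PairIdx n → ℝ) :
    dPsi A v = -(A * Matrix.diagonal v * A) := rfl

lemma hasFDerivAt_psiF {w : PairIdx n → ℝ} (hM : IsUnit (Mmat w)) :
    HasFDerivAt (psiF n) (dPsi (psiF n w)) w := by
  have hu : (↑hM.unit⁻¹ : Matrix (Fin n) (Fin n) ℝ) = Ring.inverse (Mmat w) := by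
    exact (Ring.inverse_unit hM.unit).symm.trans (congrArg Ring.inverse hM.unit_spec)
  have h2 : HasFDerivAt (fun w' => Ring.inverse (Mmat w'))
      ((-ContinuousLinearMap.mulLeftRight ℝ _ (↑hM.unit⁻¹) (↑hM.unit⁻¹)).comp (Lclm n)) w :=
    by have := hasFDerivAt_ringInverse (𝕜 := ℝ) hM.unit; exact this.comp w (hasFDerivAt_Mmat w)
  have h3 := ((LB n).hasFDerivAt).comp w h2
  have heq : (LB n).comp
        ((-ContinuousLinearMap.mulLeftRight ℝ _ (↑hM.unit⁻¹) (↑hM.unit⁻¹)).comp (Lclm n))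
      = dPsi (psiF n w) := by
    ext v : 1
    show incB n * (-((↑hM.unit⁻¹ : Matrix (Fin n) (Fin n) ℝ) * Lw v *
      (↑hM.unit⁻¹ : Matrix (Fin n) (Fin n) ℝ))) * (incB n)ᵀ = _
    simp only [ContinuousLinearMap.comp_apply, ContinuousLinearMap.neg_apply,
      ContinuousLinearMap.mulLeftRight_apply, Lclm_apply, LB_apply, dPsi_apply, hu,
      psiF, Lw, Matrix.mul_neg, Matrix.neg_mul, neg_inj]
    simp only [Matrix.mul_assoc]
  exact h3.congr_fderiv heq

lemma isOpen_Uset (n : ℕ) : IsOpen {w : PairIdx n → ℝ | IsUnit (Mmat w)} := by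
  have hcont : Continuous fun w : PairIdx n → ℝ => Mmat w := by
    have : Continuous fun w : PairIdx n → ℝ => Lclm n w + (n:ℝ)⁻¹ • Jmat n :=
      ((Lclm n).continuous).add continuous_const
    exact this
  exact Units.isOpen.preimage hcont

/-- dual pairing as CLM -/
noncomputable def dualCLM (n : ℕ) (u : PairIdx n → ℝ) : (PairIdx n → ℝ) →L[ℝ] ℝ :=
  LinearMap.toContinuousLinearMap
    { toFun := fun v => ∑ e, u e * v e
      map_add' := fun a b => by
        simp only [Pi.add_apply, mul_add, Finset.sum_add_distrib]
      map_smul' := fun c a => by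
        simp only [Pi.smul_apply, smul_eq_mul, RingHom.id_apply, Finset.mul_sum]
        exact Finset.sum_congr rfl fun e _ => by ring }

@[simp] lemma dualCLM_apply {n : ℕ} (u v : PairIdx n → ℝ) :
    dualCLM n u v = ∑ e, u e * v e := rfl

lemma dualCLM_single {n : ℕ} (u : PairIdx n → ℝ) (k : PairIdx n) :
    dualCLM n u (Pi.single k 1) = u k := by
  rw [dualCLM_apply, Finset.sum_eq_single k]
  · simp
  · intro e _ he; simp [Pi.single_eq_of_ne he]
  · intro h; exact absurd (Finset.mem_univ k) h

/-- `dualCLM` as a CLM in its coefficient argument -/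
noncomputable def iotaCLM (n : ℕ) :
    (PairIdx n → ℝ) →L[ℝ] ((PairIdx n → ℝ) →L[ℝ] ℝ) :=
  LinearMap.toContinuousLinearMap
    { toFun := dualCLM n
      map_add' := fun u u' => by
        ext v
        simp only [dualCLM_apply, ContinuousLinearMap.add_apply, Pi.add_apply, add_mul,
          Finset.sum_add_distrib]
      map_smul' := fun c u => by
        ext v
        simp only [dualCLM_apply, RingHom.id_apply, ContinuousLinearMap.smul_apply,
          Pi.smul_apply, smul_eq_mul, Finset.mul_sum, mul_assoc] }

@[simp] lemma iotaCLM_apply {n : ℕ} (u : PairIdx n → ℝ) : iotaCLM n u = dualCLM n u := rfl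

/-- entry evaluation as CLM -/
noncomputable def entCLM (n : ℕ) (a b : PairIdx n) :
    Matrix (PairIdx n) (PairIdx n) ℝ →L[ℝ] ℝ :=
  LinearMap.toContinuousLinearMap
    { toFun := fun A => A a b
      map_add' := fun X Y => rfl
      map_smul' := fun c X => rfl }

@[simp] lemma entCLM_apply {n : ℕ} (a b : PairIdx n) (A : Matrix (PairIdx n) (PairIdx n) ℝ) :
    entCLM n a b A = A a b := rfl

lemma mul_diag_mul_apply {n : ℕ} (A : Matrix (PairIdx n) (PairIdx n) ℝ) (v : PairIdx n → ℝ)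
    (a b : PairIdx n) :
    (A * Matrix.diagonal v * A) a b = ∑ e, A a e * v e * A e b := by
  rw [Matrix.mul_apply]
  exact Finset.sum_congr rfl fun e _ => by rw [Matrix.mul_diagonal]

lemma mul_diag_single_mul_apply {n : ℕ} (A : Matrix (PairIdx n) (PairIdx n) ℝ)
    (i a b : PairIdx n) :
    (A * Matrix.diagonal (Pi.single i (1:ℝ)) * A) a b = A a i * A i b := by
  rw [mul_diag_mul_apply, Finset.sum_eq_single i]
  · simp
  · intro e _ he; simp [Pi.single_eq_of_ne he]
  · intro h; exact absurd (Finset.mem_univ i) h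

/-- the coefficient vector of the first derivative of `Fobj` -/
noncomputable def cvec {n : ℕ} (S : Finset (PairIdx n)) (rbar : PairIdx n → ℝ)
    (A : Matrix (PairIdx n) (PairIdx n) ℝ) : PairIdx n → ℝ :=
  fun e => ∑ j ∈ S, (2 * (A j j - rbar j)) * (-(A j e * A e j))

lemma hasFDerivAt_ent {n : ℕ} {w : PairIdx n → ℝ} (hM : IsUnit (Mmat w)) (a b : PairIdx n) :
    HasFDerivAt (fun w' => psiF n w' a b) ((entCLM n a b).comp (dPsi (psiF n w))) w :=
  (entCLM n a b).hasFDerivAt.comp w (hasFDerivAt_psiF hM)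

lemma hasFDerivAt_Fobj {n : ℕ} (hn : 2 ≤ n) (S : Finset (PairIdx n)) (rbar : PairIdx n → ℝ)
    {w : PairIdx n → ℝ} (hM : IsUnit (Mmat w)) :
    HasFDerivAt (Fobj S rbar) (dualCLM n (cvec S rbar (psiF n w))) w := by
  have hsum : HasFDerivAt (fun w' => ∑ j ∈ S, (psiF n w' j j - rbar j) ^ 2)
      (∑ j ∈ S, (2 * (psiF n w j j - rbar j)) •
        ((entCLM n j j).comp (dPsi (psiF n w)))) w := by
    refine HasFDerivAt.fun_sum fun j _ => ?_
    have h := (hasFDerivAt_ent hM j j).sub_const (rbar j)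
    have h2 := h.fun_mul h
    have hfn : (fun w' => (psiF n w' j j - rbar j) ^ 2)
        = fun w' => (psiF n w' j j - rbar j) * (psiF n w' j j - rbar j) := by
      funext w'; rw [sq]
    rw [hfn]
    convert h2 using 1
    · rfl
    rw [two_mul, add_smul]
  have heq : (∑ j ∈ S, (2 * (psiF n w j j - rbar j)) •
        ((entCLM n j j).comp (dPsi (psiF n w))))
      = dualCLM n (cvec S rbar (psiF n w)) := by
    ext v
    simp only [ContinuousLinearMap.coe_sum', Finset.sum_apply,
      ContinuousLinearMap.coe_smul', Pi.smul_apply, ContinuousLinearMap.comp_apply,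
      dPsi_apply, entCLM_apply, Matrix.neg_apply, mul_diag_mul_apply, dualCLM_apply, cvec,
      smul_eq_mul, Finset.sum_mul]
    rw [Finset.sum_comm]
    refine Finset.sum_congr rfl fun j _ => ?_
    rw [mul_neg, Finset.mul_sum, ← Finset.sum_neg_distrib]
    refine Finset.sum_congr rfl fun e _ => ?_
    ring
  rw [heq] at hsum
  refine hsum.congr_of_eventuallyEq ?_
  filter_upwards [(isOpen_Uset n).mem_nhds hM] with w' hw'
  simp only [Fobj, psiF_eq_Rw hn hw']

lemma psiF_symm {n : ℕ} {w : PairIdx n → ℝ} (hM : IsUnit (Mmat w)) (a b : PairIdx n) :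
    psiF n w a b = psiF n w b a := by
  have h : (psiF n w)ᵀ = psiF n w := by
    rw [psiF, ← Matrix.nonsing_inv_eq_ringInverse, Matrix.transpose_mul, Matrix.transpose_mul,
      Matrix.transpose_transpose, Matrix.transpose_nonsing_inv, Mmat_transpose,
      Matrix.mul_assoc]
  calc psiF n w a b = (psiF n w)ᵀ b a := rfl
    _ = psiF n w b a := by rw [h]

/-- At every strictly positive weight vector `w`, the objective `F` is
twice differentiable with Hessian `H_F(w) = -4 [R diag(Δ(w)) R] ∘ R + 2 (R∘R) I_S (R∘R)`,
i.e. `∂²F/∂w_i ∂w_k = -4 (Σ_j R_{i,j} Δ(w)_j R_{j,k}) R_{i,k} + 2 Σ_{j ∈ S} R_{i,j}² R_{j,k}²`,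
where `Δ(w)_j = r̄(j) - [R(w)]_{j,j}` for `j ∈ S` and `0` otherwise. -/
theorem stmt14 {n : ℕ} (hn : 2 ≤ n) (S : Finset (PairIdx n)) (rbar : PairIdx n → ℝ)
    (w : PairIdx n → ℝ) (hw : ∀ i, 0 < w i) :
    DifferentiableAt ℝ (Fobj S rbar) w ∧
    DifferentiableAt ℝ (fderiv ℝ (Fobj S rbar)) w ∧
    ∀ i k : PairIdx n,
      fderiv ℝ (fderiv ℝ (Fobj S rbar)) w (Pi.single i 1) (Pi.single k 1)
        = -4 * (∑ j, Rw w i j * (if j ∈ S then rbar j - Rw w j j else 0) * Rw w j k)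
              * Rw w i k
          + 2 * ∑ j ∈ S, (Rw w i j) ^ 2 * (Rw w j k) ^ 2 := by
  have hM : IsUnit (Mmat w) := (Mmat_posDef hn hw).isUnit
  have hψR : psiF n w = Rw w := psiF_eq_Rw hn hM
  have hsym : ∀ a b, Rw w a b = Rw w b a := by
    intro a b; rw [← hψR]; exact psiF_symm hM a b
  have hent : ∀ a b, HasFDerivAt (fun w' => psiF n w' a b)
      ((entCLM n a b).comp (dPsi (psiF n w))) w := fun a b => hasFDerivAt_ent hM a b
  have hcomp : ∀ k : PairIdx n, ∃ G : (PairIdx n → ℝ) →L[ℝ] ℝ,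
      HasFDerivAt (fun w' => cvec S rbar (psiF n w') k) G w ∧
      ∀ i, G (Pi.single i 1)
        = -4 * (∑ j, Rw w i j * (if j ∈ S then rbar j - Rw w j j else 0) * Rw w j k)
              * Rw w i k
          + 2 * ∑ j ∈ S, (Rw w i j) ^ 2 * (Rw w j k) ^ 2 := by
    intro k
    refine ⟨_, HasFDerivAt.fun_sum (fun j (_ : j ∈ S) =>
      (((hent j j).sub_const (rbar j)).const_mul 2).mul
        (((hent j k).mul (hent k j)).neg)), ?_⟩
    intro i
    have hite : (∑ j, Rw w i j * (if j ∈ S then rbar j - Rw w j j else 0) * Rw w j k)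
        = ∑ j ∈ S, Rw w i j * (rbar j - Rw w j j) * Rw w j k := by
      rw [show (∑ j, Rw w i j * (if j ∈ S then rbar j - Rw w j j else 0) * Rw w j k)
          = ∑ j, (if j ∈ S then Rw w i j * (rbar j - Rw w j j) * Rw w j k else 0) from
        Finset.sum_congr rfl fun j _ => by split_ifs <;> simp]
      rw [Finset.sum_ite_mem, Finset.univ_inter]
    rw [hite]
    simp only [ContinuousLinearMap.coe_sum', Finset.sum_apply, ContinuousLinearMap.add_apply,
      ContinuousLinearMap.coe_smul', Pi.smul_apply, ContinuousLinearMap.comp_apply,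
      ContinuousLinearMap.neg_apply, dPsi_apply, entCLM_apply, Matrix.neg_apply,
      mul_diag_single_mul_apply, smul_eq_mul, hψR]
    rw [Finset.mul_sum, Finset.sum_mul, Finset.mul_sum, ← Finset.sum_add_distrib]
    refine Finset.sum_congr rfl fun j _ => ?_
    rw [hsym j i, hsym k i, hsym k j]
    ring
  choose G hG hGval using hcomp
  have hGpi : HasFDerivAt (fun w' => cvec S rbar (psiF n w'))
      (ContinuousLinearMap.pi G) w := hasFDerivAt_pi.2 hG
  have hD1 : HasFDerivAt (fun w' => dualCLM n (cvec S rbar (psiF n w')))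
      ((iotaCLM n).comp (ContinuousLinearMap.pi G)) w :=
    (iotaCLM n).hasFDerivAt.comp w hGpi
  have hfeq : fderiv ℝ (Fobj S rbar) =ᶠ[𝓝 w]
      fun w' => dualCLM n (cvec S rbar (psiF n w')) := by
    filter_upwards [(isOpen_Uset n).mem_nhds hM] with w' hw'
    exact (hasFDerivAt_Fobj hn S rbar hw').fderiv
  refine ⟨(hasFDerivAt_Fobj hn S rbar hM).differentiableAt, ?_, ?_⟩
  · exact (hfeq.differentiableAt_iff).mpr hD1.differentiableAt
  · intro i k
    have h2 : fderiv ℝ (fderiv ℝ (Fobj S rbar)) w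
        = (iotaCLM n).comp (ContinuousLinearMap.pi G) := by
      rw [hfeq.fderiv_eq]; exact hD1.fderiv
    rw [h2]
    rw [ContinuousLinearMap.comp_apply, iotaCLM_apply, dualCLM_single,
      ContinuousLinearMap.pi_apply]
    exact hGval k i
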